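/- If F ⊆ F' are countable Borel equivalence relations on a standard Borel space X, F has finite classes, and F' is hyperfinite (an increasing union of finite Borel equivalence relations), then there exists an increasing sequence (F_n) of Borel equivalence relations with finite classes such that F ⊆ F_n for all n and ⋃_n F_n = F'. -/

import Mathlib

open Filter

/-- `E` is an equivalence relation (as a set of pairs). -/
def IsEqv {X : Type*} (E : Set (X × X)) : Prop :=
  (∀ x, (x, x) ∈ E) ∧ (∀ x y, (x, y) ∈ E → (y, x) ∈ E) ∧
    (∀ x y z, (x, y) ∈ E → (y, z) ∈ E → (x, z) ∈ E)

/-- all classes of `E` are finite. -/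
def FiniteClasses {X : Type*} (E : Set (X × X)) : Prop :=
  ∀ x, {y | (x, y) ∈ E}.Finite

/-- all classes of `E` are countable. -/
def CountableClasses {X : Type*} (E : Set (X × X)) : Prop :=
  ∀ x, {y | (x, y) ∈ E}.Countable

/-- `E` is an increasing union of finite Borel equivalence relations. -/
def Hyperfinite {X : Type*} [MeasurableSpace X] (E : Set (X × X)) : Prop :=
  ∃ F : ℕ → Set (X × X), Monotone F ∧ (∀ n, MeasurableSet (F n)) ∧
    (∀ n, IsEqv (F n)) ∧ (∀ n, FiniteClasses (F n)) ∧ (⋃ n, F n) = E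

/-- `[ℕ]^ℕ`: infinite subsets of `ℕ`, identified with their increasing enumerations. -/
abbrev Inc : Type := {f : ℕ → ℕ // StrictMono f}

/-- the length-`n` initial segment of `x : ℕ → ℕ`, as a finite sequence. -/
def seg (x : ℕ → ℕ) (n : ℕ) : List ℕ := (List.range n).map x

section Novikov
open Set Function MeasureTheory PiNat

variable {α : Type*} [TopologicalSpace α] [T2Space α] [MeasurableSpace α] [OpensMeasurableSpace α]

/-- A countable family of sets admits Borel envelopes with empty intersection. -/
def NSep (S : ℕ → Set α) : Prop :=
  ∃ B : ℕ → Set α, (∀ n, S n ⊆ B n ∧ MeasurableSet (B n)) ∧ (⋂ n, B n) = ∅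

lemma nsep_step {f : ℕ → (ℕ → ℕ) → α} (m : ℕ → ℕ) (x : ℕ → ℕ → ℕ) (j : ℕ)
    (h : ¬ NSep (fun n => f n '' cylinder (x n) (m n))) :
    ∃ x' : ℕ → ℕ, x' ∈ cylinder (x j) (m j) ∧
      ¬ NSep (fun n => f n '' cylinder (update x j x' n) (update m j (m j + 1) n)) := by
  by_contra h'
  push_neg at h'
  apply h
  have key : ∀ k : ℕ, NSep (fun n =>
      f n '' cylinder (update x j (update (x j) (m j) k) n) (update m j (m j + 1) n)) :=
    fun k => h' _ (update_mem_cylinder _ _ _)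
  choose B hB hBe using key
  refine ⟨update (fun n => ⋂ k, B k n) j (⋃ k, B k j), fun n => ⟨?_, ?_⟩, ?_⟩
  · show f n '' cylinder (x n) (m n) ⊆ update (fun n => ⋂ k, B k n) j (⋃ k, B k j) n
    rcases eq_or_ne n j with rfl | hnj
    · rw [update_self]
      rw [← iUnion_cylinder_update (x n) (m n), image_iUnion]
      refine iUnion_subset fun k => subset_iUnion_of_subset k ?_
      have := (hB k n).1
      simpa using this
    · rw [update_of_ne hnj]
      refine subset_iInter fun k => ?_
      have := (hB k n).1
      simpa [update_of_ne hnj] using this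
  · rcases eq_or_ne n j with rfl | hnj
    · rw [update_self]; exact MeasurableSet.iUnion fun k => (hB k n).2
    · rw [update_of_ne hnj]; exact MeasurableSet.iInter fun k => (hB k n).2
  · ext z
    simp only [mem_iInter, mem_empty_iff_false, iff_false]
    intro hz
    have hzj := hz j
    rw [update_self] at hzj
    obtain ⟨k, hk⟩ := mem_iUnion.1 hzj
    have : z ∈ ⋂ n, B k n := by
      refine mem_iInter.2 fun n => ?_
      rcases eq_or_ne n j with rfl | hnj
      · exact hk
      · have := hz n; rw [update_of_ne hnj] at this; exact mem_iInter.1 this k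
    rw [hBe k] at this
    exact this

theorem nsep_of_analytic (A : ℕ → Set α) (hA : ∀ n, AnalyticSet (A n))
    (hiA : (⋂ n, A n) = ∅) : NSep A := by
  by_cases he : ∃ n, A n = ∅
  · obtain ⟨n₀, hn₀⟩ := he
    refine ⟨fun n => if n = n₀ then ∅ else univ, fun n => ⟨?_, ?_⟩, ?_⟩
    · rcases eq_or_ne n n₀ with rfl | h
      · simp [hn₀]
      · simp [h]
    · rcases eq_or_ne n n₀ with rfl | h
      · simp
      · simp [h]
    · refine eq_empty_of_subset_empty ?_
      intro z hz
      have := mem_iInter.1 hz n₀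
      simpa using this
  · push_neg at he
    have hrange : ∀ n, ∃ g : (ℕ → ℕ) → α, Continuous g ∧ range g = A n := by
      intro n
      have h := hA n
      rw [AnalyticSet] at h
      rcases h with h | h
      · exact absurd h (he n).ne_empty
      · exact h
    choose f hfc hfr using hrange
    by_contra hN
    -- states: pairs (lengths, base points) whose cylinder-image family is not separable
    let A' := { p : (ℕ → ℕ) × (ℕ → ℕ → ℕ) //
      ¬ NSep (fun n => f n '' cylinder (p.2 n) (p.1 n)) }
    have hstep : ∀ (p : A') (j : ℕ), ∃ q : A',
        q.1.1 = update p.1.1 j (p.1.1 j + 1) ∧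
        (∀ i, i ≠ j → q.1.2 i = p.1.2 i) ∧
        q.1.2 j ∈ cylinder (p.1.2 j) (p.1.1 j) := by
      rintro ⟨⟨m, x⟩, hp⟩ j
      obtain ⟨x', hx', hb⟩ := nsep_step m x j hp
      exact ⟨⟨(update m j (m j + 1), update x j x'), hb⟩, rfl,
        fun i hij => update_of_ne hij _ _, by
          show update x j x' j ∈ cylinder (x j) (m j)
          rw [update_self]; exact hx'⟩
    choose Fs hF1 hF2 hF3 using hstep
    let c : ℕ → ℕ := fun t => (Nat.unpair t).1
    have hc : ∀ j T, ∃ t, T ≤ t ∧ c t = j := by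
      intro j T
      exact ⟨Nat.pair j T, Nat.right_le_pair j T, by simp [c]⟩
    have hp0 : ¬ NSep (fun n => f n '' cylinder ((fun _ _ => (0:ℕ)) n) ((fun _ => (0:ℕ)) n)) := by
      simpa [cylinder_zero, image_univ, hfr] using hN
    let p0 : A' := ⟨(fun _ => 0, fun _ _ => 0), hp0⟩
    let p : ℕ → A' := fun t => Nat.rec p0 (fun t pt => Fs pt (c t)) t
    have prec : ∀ t, p (t + 1) = Fs (p t) (c t) := fun t => rfl
    let m : ℕ → ℕ → ℕ := fun t => (p t).1.1
    let x : ℕ → ℕ → ℕ → ℕ := fun t => (p t).1.2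
    have hm_succ : ∀ t, m (t + 1) = update (m t) (c t) (m t (c t) + 1) := by
      intro t
      show (p (t+1)).1.1 = _
      rw [prec t, hF1]
    have hm_mono : ∀ j, Monotone fun t => m t j := by
      intro j
      refine monotone_nat_of_le_succ fun t => ?_
      rw [hm_succ t]
      rcases eq_or_ne (c t) j with rfl | h
      · rw [update_self]; exact Nat.le_succ _
      · rw [update_of_ne (Ne.symm h)]
    have hx_chain : ∀ j s t, s ≤ t → x t j ∈ cylinder (x s j) (m s j) := by
      intro j s t hst
      induction t, hst using Nat.le_induction with
      | base => exact self_mem_cylinder _ _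
      | succ t hst ih =>
        rcases eq_or_ne (c t) j with rfl | h
        · have h3 : x (t + 1) (c t) ∈ cylinder (x t (c t)) (m t (c t)) := by
            show (p (t+1)).1.2 (c t) ∈ _
            rw [prec t]; exact hF3 _ _
          refine mem_cylinder_iff.2 fun i hi => ?_
          have hi' : i < m t (c t) := lt_of_lt_of_le hi (hm_mono _ hst)
          rw [mem_cylinder_iff.1 h3 i hi', mem_cylinder_iff.1 ih i hi]
        · have : x (t + 1) j = x t j := by
            show (p (t+1)).1.2 j = _
            rw [prec t]; exact hF2 _ _ _ (Ne.symm h)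
          rw [this]; exact ih
    have hunbdd : ∀ j N, ∃ t, N ≤ m t j := by
      intro j N
      induction N with
      | zero => exact ⟨0, Nat.zero_le _⟩
      | succ N ih =>
        obtain ⟨t, ht⟩ := ih
        obtain ⟨t', htt', hct'⟩ := hc j t
        refine ⟨t' + 1, ?_⟩
        rw [hm_succ t', hct', update_self]
        exact Nat.succ_le_succ (le_trans ht (hm_mono j htt'))
    have hZ : ∀ j k, ∃ t, k + 1 ≤ m t j := fun j k => hunbdd j (k + 1)
    choose tk htk using hZ
    let z : ℕ → ℕ → ℕ := fun j k => x (tk j k) j k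
    have hagree : ∀ j t k, k < m t j → x t j k = z j k := by
      intro j t k hk
      rcases le_total t (tk j k) with h | h
      · have := hx_chain j t (tk j k) h
        exact (mem_cylinder_iff.1 this k hk).symm
      · have := hx_chain j (tk j k) t h
        exact mem_cylinder_iff.1 this k (htk j k)
    have hincl : ∀ j t, cylinder (x t j) (m t j) ⊆ cylinder (z j) (m t j) := by
      intro j t w hw
      refine mem_cylinder_iff.2 fun i hi => ?_
      rw [mem_cylinder_iff.1 hw i hi]
      exact hagree j t i hi
    -- all limit values agree
    have hall : ∀ i j, f i (z i) = f j (z j) := by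
      intro i j
      by_contra hne
      have hij : i ≠ j := by rintro rfl; exact hne rfl
      obtain ⟨u, v, u_open, v_open, hu, hv, huv⟩ := t2_separation hne
      letI : MetricSpace (ℕ → ℕ) := metricSpaceNatNat
      obtain ⟨εx, εxpos, hεx⟩ : ∃ εx : ℝ, εx > 0 ∧ Metric.ball (z i) εx ⊆ f i ⁻¹' u := by
        apply Metric.mem_nhds_iff.1
        exact (hfc i).continuousAt.preimage_mem_nhds (u_open.mem_nhds hu)
      obtain ⟨εy, εypos, hεy⟩ : ∃ εy : ℝ, εy > 0 ∧ Metric.ball (z j) εy ⊆ f j ⁻¹' v := by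
        apply Metric.mem_nhds_iff.1
        exact (hfc j).continuousAt.preimage_mem_nhds (v_open.mem_nhds hv)
      obtain ⟨N, hNlt⟩ : ∃ N : ℕ, (1 / 2 : ℝ) ^ N < min εx εy :=
        exists_pow_lt_of_lt_one (lt_min εxpos εypos) (by norm_num)
      obtain ⟨t₁, ht₁⟩ := hunbdd i N
      obtain ⟨t₂, ht₂⟩ := hunbdd j N
      set t := max t₁ t₂ with ht
      have hmi : N ≤ m t i := le_trans ht₁ (hm_mono i (le_max_left _ _))
      have hmj : N ≤ m t j := le_trans ht₂ (hm_mono j (le_max_right _ _))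
      have hcylu : f i '' cylinder (x t i) (m t i) ⊆ u := by
        refine subset_trans (image_mono ((hincl i t).trans (cylinder_anti _ hmi))) ?_
        rw [image_subset_iff]
        refine subset_trans ?_ hεx
        intro w hw
        have := mem_cylinder_iff_dist_le.1 hw
        exact Metric.mem_ball.2 (lt_of_le_of_lt this (lt_of_lt_of_le hNlt (min_le_left _ _)))
      have hcylv : f j '' cylinder (x t j) (m t j) ⊆ v := by
        refine subset_trans (image_mono ((hincl j t).trans (cylinder_anti _ hmj))) ?_
        rw [image_subset_iff]
        refine subset_trans ?_ hεy
        intro w hw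
        have := mem_cylinder_iff_dist_le.1 hw
        exact Metric.mem_ball.2 (lt_of_le_of_lt this (lt_of_lt_of_le hNlt (min_le_right _ _)))
      refine (p t).2 ⟨fun n => if n = i then u else if n = j then v else univ,
        fun n => ⟨?_, ?_⟩, ?_⟩
      · show f n '' cylinder (x t n) (m t n) ⊆ _
        rcases eq_or_ne n i with rfl | hni
        · simpa using hcylu
        · rcases eq_or_ne n j with rfl | hnj
          · simp only [if_neg hni, if_pos rfl]
            exact hcylv
          · simp [hni, hnj]
      · rcases eq_or_ne n i with rfl | hni
        · simpa using u_open.measurableSet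
        · rcases eq_or_ne n j with rfl | hnj
          · simp only [if_neg hni, if_pos rfl]
            exact v_open.measurableSet
          · simp only [if_neg hni, if_neg hnj]
            exact MeasurableSet.univ
      · refine eq_empty_of_subset_empty fun w hw => ?_
        have hwi : w ∈ u := by simpa using mem_iInter.1 hw i
        have hwj : w ∈ v := by simpa [Ne.symm hij] using mem_iInter.1 hw j
        exact (Set.disjoint_iff.1 huv) ⟨hwi, hwj⟩
    -- the common value lies in all A n, contradiction
    have : f 0 (z 0) ∈ ⋂ n, A n := by
      refine mem_iInter.2 fun n => ?_
      rw [← hfr n, hall 0 n]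
      exact mem_range_self _
    rw [hiA] at this
    exact this

end Novikov


open Set Function MeasureTheory PiNat in
theorem stmt0 {X : Type*} [MeasurableSpace X] [StandardBorelSpace X]
    (F F' : Set (X × X)) (hFm : MeasurableSet F) (hF'm : MeasurableSet F')
    (hFe : IsEqv F) (hF'e : IsEqv F')
    (hFc : CountableClasses F) (hF'c : CountableClasses F')
    (hsub : F ⊆ F') (hfin : FiniteClasses F) (hhyp : Hyperfinite F') :
    ∃ Fn : ℕ → Set (X × X), Monotone Fn ∧
      (∀ n, MeasurableSet (Fn n) ∧ IsEqv (Fn n) ∧ FiniteClasses (Fn n) ∧ F ⊆ Fn n) ∧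
      (⋃ n, Fn n) = F' := by
  obtain ⟨G, hGmono, hGm, hGe, hGfin, hGU⟩ := hhyp
  letI := upgradeStandardBorel X
  -- the good sets `Aset n = {x : [x]_F ⊆ [x]_{G n}}`
  set Aset : ℕ → Set X := fun n => {x | ∀ y, (x, y) ∈ F → (x, y) ∈ G n} with hAset
  have hAmono : Monotone Aset := fun a b hab x hx y hy => hGmono hab (hx y hy)
  have hAinv : ∀ n x y, (x, y) ∈ F → y ∈ Aset n → x ∈ Aset n := by
    intro n x y hxy hy w hxw
    have hyx : (y, x) ∈ F := hFe.2.1 _ _ hxy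
    have hyw : (y, w) ∈ F := hFe.2.2 _ _ _ hyx hxw
    have h1 : (y, x) ∈ G n := hy _ hyx
    have h2 : (y, w) ∈ G n := hy _ hyw
    exact (hGe n).2.2 _ _ _ ((hGe n).2.1 _ _ h1) h2
  have hAexh : ∀ x, ∃ n, x ∈ Aset n := by
    intro x
    have hsub' : ∀ y : {y // (x, y) ∈ F}, ∃ m, (x, y.1) ∈ G m := by
      intro y
      have : (x, y.1) ∈ F' := hsub y.2
      rw [← hGU] at this
      exact mem_iUnion.1 this
    choose g hg using hsub'
    haveI : Finite {y // (x, y) ∈ F} := (hfin x).to_subtype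
    obtain ⟨M, hM⟩ := Finite.exists_le g
    exact ⟨M, fun y hy => hGmono (hM ⟨y, hy⟩) (hg ⟨y, hy⟩)⟩
  -- the bad projections
  set P : ℕ → Set X := fun n => Prod.fst '' (F \ G n) with hP
  have hPA : ∀ n x, x ∉ P n ↔ x ∈ Aset n := by
    intro n x
    constructor
    · intro hx y hy
      by_contra hcon
      exact hx ⟨(x, y), ⟨hy, hcon⟩, rfl⟩
    · rintro hx ⟨⟨a, b⟩, ⟨hab, hnab⟩, rfl⟩
      exact hnab (hx b hab)
  have hPa : ∀ n, AnalyticSet (P n) :=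
    fun n => (hFm.diff (hGm n)).analyticSet.image_of_continuous continuous_fst
  have hiP : (⋂ n, P n) = ∅ := by
    refine eq_empty_of_subset_empty fun x hx => ?_
    obtain ⟨n, hn⟩ := hAexh x
    exact ((hPA n x).2 hn) (mem_iInter.1 hx n)
  obtain ⟨B, hB, hBe⟩ := nsep_of_analytic P hPa hiP
  -- first approximation: measurable increasing exhausting subsets of the `Aset`s
  set C : ℕ → Set X := fun n => ⋃ k, ⋃ _ : k ≤ n, (B k)ᶜ with hC
  have hCm : ∀ n, MeasurableSet (C n) :=
    fun n => MeasurableSet.iUnion fun k => MeasurableSet.iUnion fun _ => (hB k).2.compl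
  have hCA : ∀ n, C n ⊆ Aset n := by
    intro n x hx
    simp only [hC, mem_iUnion] at hx
    obtain ⟨k, hk, hxk⟩ := hx
    have : x ∉ P k := fun h => hxk ((hB k).1 h)
    exact hAmono hk ((hPA k x).1 this)
  have hCexh : ∀ x, ∃ n, x ∈ C n := by
    intro x
    have : x ∉ ⋂ n, B n := by rw [hBe]; exact notMem_empty x
    obtain ⟨k, hk⟩ := not_forall.1 (fun h => this (mem_iInter.2 h))
    exact ⟨k, mem_iUnion.2 ⟨k, mem_iUnion.2 ⟨le_refl k, hk⟩⟩⟩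
  -- invariantization
  have key : ∀ n (D : {D : Set X // MeasurableSet D ∧ D ⊆ Aset n}),
      ∃ D' : {D : Set X // MeasurableSet D ∧ D ⊆ Aset n},
        ∀ x y, y ∈ D.1 → (x, y) ∈ F → x ∈ D'.1 := by
    rintro n ⟨D, hDm, hDA⟩
    set sat : Set X := Prod.fst '' (F ∩ (univ ×ˢ D)) with hsat
    have hsat_an : AnalyticSet sat :=
      (hFm.inter (MeasurableSet.univ.prod hDm)).analyticSet.image_of_continuous continuous_fst
    have hsatA : sat ⊆ Aset n := by
      rintro x ⟨⟨a, b⟩, ⟨hab, -, hb⟩, rfl⟩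
      exact hAinv n a b hab (hDA hb)
    have hdisj : Disjoint sat (P n) := by
      rw [Set.disjoint_iff]
      rintro x ⟨hx1, hx2⟩
      exact ((hPA n x).2 (hsatA hx1)) hx2
    obtain ⟨u, hsu, hdu, hum⟩ := hsat_an.measurablySeparable (hPa n) hdisj
    have huA : u ⊆ Aset n := by
      intro x hx
      refine (hPA n x).1 fun hxP => ?_
      exact (Set.disjoint_iff.1 hdu) ⟨hxP, hx⟩
    refine ⟨⟨u, hum, huA⟩, fun x y hy hxy => ?_⟩
    exact hsu ⟨(x, y), ⟨hxy, mem_univ _, hy⟩, rfl⟩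
  choose Φ hΦ using key
  set c₀ : ∀ n, {D : Set X // MeasurableSet D ∧ D ⊆ Aset n} :=
    fun n => ⟨C n, hCm n, hCA n⟩ with hc₀
  set Dit : ∀ n, ℕ → {D : Set X // MeasurableSet D ∧ D ⊆ Aset n} :=
    fun n k => (Φ n)^[k] (c₀ n) with hDit
  have hDit_succ : ∀ n k, Dit n (k + 1) = Φ n (Dit n k) := by
    intro n k
    simp only [hDit, Function.iterate_succ_apply']
  set D : ℕ → Set X := fun n => ⋃ k, (Dit n k).1 with hD
  have hDm : ∀ n, MeasurableSet (D n) := fun n => MeasurableSet.iUnion fun k => (Dit n k).2.1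
  have hDA : ∀ n, D n ⊆ Aset n := fun n => iUnion_subset fun k => (Dit n k).2.2
  have hDC : ∀ n, C n ⊆ D n := fun n => subset_iUnion_of_subset 0 (by rfl)
  have hDinv : ∀ n x y, (x, y) ∈ F → y ∈ D n → x ∈ D n := by
    intro n x y hxy hy
    obtain ⟨k, hk⟩ := mem_iUnion.1 hy
    refine mem_iUnion.2 ⟨k + 1, ?_⟩
    rw [hDit_succ n k]
    exact hΦ n (Dit n k) x y hk hxy
  -- make it monotone
  set Df : ℕ → Set X := fun n => ⋃ k, ⋃ _ : k ≤ n, D k with hDf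
  have hDfm : ∀ n, MeasurableSet (Df n) :=
    fun n => MeasurableSet.iUnion fun k => MeasurableSet.iUnion fun _ => hDm k
  have hDfA : ∀ n, Df n ⊆ Aset n := by
    intro n x hx
    simp only [hDf, mem_iUnion] at hx
    obtain ⟨k, hk, hxk⟩ := hx
    exact hAmono hk (hDA k hxk)
  have hDfmono : Monotone Df := by
    intro a b hab x hx
    simp only [hDf, mem_iUnion] at hx ⊢
    obtain ⟨k, hk, hxk⟩ := hx
    exact ⟨k, le_trans hk hab, hxk⟩
  have hDfinv : ∀ n x y, (x, y) ∈ F → y ∈ Df n → x ∈ Df n := by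
    intro n x y hxy hy
    simp only [hDf, mem_iUnion] at hy ⊢
    obtain ⟨k, hk, hyk⟩ := hy
    exact ⟨k, hk, hDinv k x y hxy hyk⟩
  have hDfexh : ∀ x, ∃ n, x ∈ Df n := by
    intro x
    obtain ⟨n, hn⟩ := hCexh x
    exact ⟨n, mem_iUnion.2 ⟨n, mem_iUnion.2 ⟨le_refl n, hDC n hn⟩⟩⟩
  -- the final sequence
  refine ⟨fun n => F ∪ (G n ∩ (Df n ×ˢ Df n)), ?_, ?_, ?_⟩
  · intro a b hab p hp
    rcases hp with hp | ⟨hp1, hp2, hp3⟩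
    · exact Or.inl hp
    · exact Or.inr ⟨hGmono hab hp1, hDfmono hab hp2, hDfmono hab hp3⟩
  · intro n
    refine ⟨hFm.union ((hGm n).inter ((hDfm n).prod (hDfm n))), ⟨?_, ?_, ?_⟩, ?_, ?_⟩
    · exact fun x => Or.inl (hFe.1 x)
    · rintro x y (h | ⟨h1, h2, h3⟩)
      · exact Or.inl (hFe.2.1 _ _ h)
      · exact Or.inr ⟨(hGe n).2.1 _ _ h1, h3, h2⟩
    · rintro x y z (hxy | ⟨h1, h2, h3⟩) (hyz | ⟨k1, k2, k3⟩)
      · exact Or.inl (hFe.2.2 _ _ _ hxy hyz)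
      · -- (x,y) ∈ F, (y,z) ∈ G n with y,z ∈ Df n
        have hyA : y ∈ Aset n := hDfA n k2
        have hyx : (y, x) ∈ F := hFe.2.1 _ _ hxy
        have hxyG : (x, y) ∈ G n := (hGe n).2.1 _ _ (hyA _ hyx)
        exact Or.inr ⟨(hGe n).2.2 _ _ _ hxyG k1, hDfinv n x y hxy k2, k3⟩
      · -- (x,y) ∈ G n with x,y ∈ Df n, (y,z) ∈ F
        have hyA : y ∈ Aset n := hDfA n h3
        have hyzG : (y, z) ∈ G n := hyA _ hyz
        have hzy : (z, y) ∈ F := hFe.2.1 _ _ hyz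
        exact Or.inr ⟨(hGe n).2.2 _ _ _ h1 hyzG, h2, hDfinv n z y hzy h3⟩
      · exact Or.inr ⟨(hGe n).2.2 _ _ _ h1 k1, h2, k3⟩
    · intro x
      refine ((hfin x).union (hGfin n x)).subset ?_
      rintro y (h | ⟨h1, -, -⟩)
      · exact Or.inl h
      · exact Or.inr h1
    · exact fun p hp => Or.inl hp
  · apply Set.eq_of_subset_of_subset
    · refine iUnion_subset fun n => union_subset hsub ?_
      refine subset_trans (inter_subset_left) ?_
      rw [← hGU]
      exact subset_iUnion G n
    · rintro ⟨x, y⟩ hxy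
      have hxy' : (x, y) ∈ ⋃ n, G n := by rw [hGU]; exact hxy
      obtain ⟨n₀, hn₀⟩ := mem_iUnion.1 hxy'
      obtain ⟨n₁, hn₁⟩ := hDfexh x
      obtain ⟨n₂, hn₂⟩ := hDfexh y
      refine mem_iUnion.2 ⟨n₀ ⊔ n₁ ⊔ n₂, Or.inr ⟨?_, ?_, ?_⟩⟩
      · exact hGmono (le_sup_of_le_left le_sup_left) hn₀
      · exact hDfmono (le_sup_of_le_left le_sup_right) hn₁
      · exact hDfmono le_sup_right hn₂
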